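/- In a grafted simplicial complex, the facets meeting a fixed leaf F have nested intersections with F: if H₁, …, H_t are all facets other than F intersecting F nontrivially, then the sets H_i ∩ F form a chain under inclusion. -/
import Mathlib


open Finset

variable {α : Type*} [DecidableEq α]

/-- A set of vertices meeting every facet. -/
def IsVertexCover (Δ : Finset (Finset α)) (A : Finset α) : Prop :=
  ∀ F ∈ Δ, (A ∩ F).Nonempty

/-- A vertex cover none of whose proper subsets is a cover. -/
def IsMinimalVertexCover (Δ : Finset (Finset α)) (A : Finset α) : Prop :=
  IsVertexCover Δ A ∧ ∀ B ⊆ A, IsVertexCover Δ B → B = A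

/-- The vertex covering number α(Δ). -/
noncomputable def coverNum (Δ : Finset (Finset α)) : ℕ :=
  sInf {n | ∃ A : Finset α, IsVertexCover Δ A ∧ A.card = n}

/-- All minimal vertex covers have the same cardinality. -/
def Unmixed (Δ : Finset (Finset α)) : Prop :=
  ∀ A B : Finset α, IsMinimalVertexCover Δ A → IsMinimalVertexCover Δ B →
    A.card = B.card

/-- `F` is a leaf of `Δ`: it is the only facet, or some facet `G ≠ F`
satisfies `F ∩ F' ⊆ F ∩ G` for every facet `F' ≠ F`. -/
def IsLeaf (Δ : Finset (Finset α)) (F : Finset α) : Prop :=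
  F ∈ Δ ∧ (Δ = {F} ∨ ∃ G ∈ Δ, G ≠ F ∧ ∀ F' ∈ Δ, F' ≠ F → F ∩ F' ⊆ F ∩ G)

/-- `G` is a joint of the leaf `F` in `Δ`. -/
def IsJoint (Δ : Finset (Finset α)) (G F : Finset α) : Prop :=
  F ∈ Δ ∧ G ∈ Δ ∧ G ≠ F ∧ (∀ F' ∈ Δ, F' ≠ F → F ∩ F' ⊆ F ∩ G) ∧
    (F ∩ G).Nonempty

def HasLeaf (Δ : Finset (Finset α)) : Prop := ∃ F, IsLeaf Δ F

/-- Every nonempty subcollection has a leaf. -/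
def IsForest (Δ : Finset (Finset α)) : Prop :=
  ∀ Γ ⊆ Δ, Γ.Nonempty → HasLeaf Γ

/-- Any two facets are linked by a chain of facets with consecutive
nonempty intersections. -/
def ComplexConnected (Δ : Finset (Finset α)) : Prop :=
  ∀ F ∈ Δ, ∀ G ∈ Δ,
    Relation.ReflTransGen (fun A B => A ∈ Δ ∧ B ∈ Δ ∧ (A ∩ B).Nonempty) F G

def IsTree (Δ : Finset (Finset α)) : Prop := ComplexConnected Δ ∧ IsForest Δ

/-- An independent (pairwise disjoint) set of facets of `Δ`. -/
def IndependentFacets (Δ S : Finset (Finset α)) : Prop :=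
  S ⊆ Δ ∧ ∀ F ∈ S, ∀ G ∈ S, F ≠ G → F ∩ G = ∅

/-- The independence number β(Δ). -/
noncomputable def indepNum (Δ : Finset (Finset α)) : ℕ :=
  sSup {n | ∃ S : Finset (Finset α), IndependentFacets Δ S ∧ S.card = n}

/-- An independent set of facets not properly contained in another. -/
def MaximalIndependent (Δ S : Finset (Finset α)) : Prop :=
  IndependentFacets Δ S ∧ ∀ T, IndependentFacets Δ T → S ⊆ T → T = S

/-- `v` is a free vertex of the facet `F`: it belongs to no other facet. -/
def FreeVertex (Δ : Finset (Finset α)) (v : α) (F : Finset α) : Prop :=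
  F ∈ Δ ∧ v ∈ F ∧ ∀ G ∈ Δ, v ∈ G → G = F

/-- The facets form an antichain (they are the maximal faces). -/
def FacetAntichain (Δ : Finset (Finset α)) : Prop :=
  ∀ F ∈ Δ, ∀ G ∈ Δ, F ⊆ G → F = G

/-- `Δ` is a grafting of `Gs` with the pairwise-disjoint simplices `Fs`:
(i) every vertex of each `G ∈ Gs` lies in some `F ∈ Fs`; (ii) `Fs` is
exactly the set of leaves of `Δ`; (iii) `Fs` and `Gs` are disjoint;
(iv) the members of `Fs` are pairwise disjoint; (v) removing any joint
`G ∈ Gs` yields a grafted complex. -/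
def IsGrafted (Δ Fs Gs : Finset (Finset α)) : Prop :=
  Δ = Fs ∪ Gs ∧
  (∀ G ∈ Gs, ∀ v ∈ G, ∃ F ∈ Fs, v ∈ F) ∧
  (∀ F, F ∈ Fs ↔ IsLeaf Δ F) ∧
  Disjoint Fs Gs ∧
  (∀ F ∈ Fs, ∀ F' ∈ Fs, F ≠ F' → F ∩ F' = ∅) ∧
  (∀ G, G ∈ Δ → G ∈ Gs → (∃ F, IsJoint Δ G F) →
    ∃ Fs' Gs', IsGrafted (Δ.erase G) Fs' Gs')
termination_by Δ.card
decreasing_by exact Finset.card_erase_lt_of_mem (by assumption)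

lemma grafted_embedded_intersections_aux (n : ℕ) :
    ∀ (Δ Fs Gs : Finset (Finset α)), Δ.card ≤ n →
    IsGrafted Δ Fs Gs → ∀ F : Finset α, IsLeaf Δ F →
    ∀ H H' : Finset α, H ∈ Δ → H' ∈ Δ → H ≠ F → H' ≠ F →
    (H ∩ F).Nonempty → (H' ∩ F).Nonempty →
    H ∩ F ⊆ H' ∩ F ∨ H' ∩ F ⊆ H ∩ F := by
  induction n with
  | zero =>
    intro Δ _ _ hcard _ F _ H H' hH _ _ _ _ _
    rw [Nat.le_zero, Finset.card_eq_zero] at hcard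
    simp [hcard] at hH
  | succ n ih =>
    intro Δ Fs Gs hcard hgraft F hF H H' hH hH' hHF hH'F hHm hH'm
    have hgraft' := hgraft
    rw [IsGrafted] at hgraft'
    obtain ⟨h1, h2, h3, h4, h5, h6⟩ := hgraft'
    have hFFs : F ∈ Fs := (h3 F).mpr hF
    obtain ⟨hFΔ, hone | ⟨G, hGΔ, hGF, hdom⟩⟩ := hF
    · rw [hone, Finset.mem_singleton] at hH; exact absurd hH hHF
    -- G is the joint; it lies in Gs
    have hGGs : G ∈ Gs := by
      have hGmem : G ∈ Fs ∪ Gs := h1 ▸ hGΔ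
      rcases Finset.mem_union.mp hGmem with hGFs | hGGs
      · exfalso
        have hemp := h5 F hFFs G hGFs (Ne.symm hGF)
        obtain ⟨v, hv⟩ := hHm
        obtain ⟨hvH, hvF⟩ := Finset.mem_inter.mp hv
        have : v ∈ F ∩ G := hdom H hH hHF (Finset.mem_inter.mpr ⟨hvF, hvH⟩)
        simp [hemp] at this
      · exact hGGs
    -- If H or H' equals G we are done, since G ∩ F contains all intersections
    by_cases hHG : H = G
    · right
      intro a ha
      obtain ⟨haH', haF⟩ := Finset.mem_inter.mp ha
      have := hdom H' hH' hH'F (Finset.mem_inter.mpr ⟨haF, haH'⟩)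
      obtain ⟨-, haG⟩ := Finset.mem_inter.mp this
      exact Finset.mem_inter.mpr ⟨hHG ▸ haG, haF⟩
    by_cases hH'G : H' = G
    · left
      intro a ha
      obtain ⟨haH, haF⟩ := Finset.mem_inter.mp ha
      have := hdom H hH hHF (Finset.mem_inter.mpr ⟨haF, haH⟩)
      obtain ⟨-, haG⟩ := Finset.mem_inter.mp this
      exact Finset.mem_inter.mpr ⟨hH'G ▸ haG, haF⟩
    -- G is a joint, so Δ.erase G is grafted
    have hFGne : (F ∩ G).Nonempty := by
      obtain ⟨v, hv⟩ := hHm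
      obtain ⟨hvH, hvF⟩ := Finset.mem_inter.mp hv
      exact ⟨v, hdom H hH hHF (Finset.mem_inter.mpr ⟨hvF, hvH⟩)⟩
    have hjoint : IsJoint Δ G F := ⟨hFΔ, hGΔ, hGF, hdom, hFGne⟩
    obtain ⟨Fs', Gs', hg'⟩ := h6 G hGΔ hGGs ⟨F, hjoint⟩
    have hcard' : (Δ.erase G).card ≤ n := by
      have := Finset.card_erase_lt_of_mem hGΔ
      omega
    -- Key claim: F is still a leaf of Δ.erase G
    have hFleaf' : IsLeaf (Δ.erase G) F := by
      by_contra hnot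
      have hg'' := hg'
      rw [IsGrafted] at hg''
      obtain ⟨h1', h2', h3', h4', h5', h6'⟩ := hg''
      have hFΔ' : F ∈ Δ.erase G := Finset.mem_erase.mpr ⟨Ne.symm hGF, hFΔ⟩
      have hFGs' : F ∈ Gs' := by
        have hmem : F ∈ Fs' ∪ Gs' := h1' ▸ hFΔ'
        rcases Finset.mem_union.mp hmem with hFFs' | hFGs'
        · exact absurd ((h3' F).mp hFFs') hnot
        · exact hFGs'
      obtain ⟨v, hv⟩ := hHm
      obtain ⟨hvH, hvF⟩ := Finset.mem_inter.mp hv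
      obtain ⟨L, hLFs', hvL⟩ := h2' F hFGs' v hvF
      have hLleaf' : IsLeaf (Δ.erase G) L := (h3' L).mp hLFs'
      have hLF : L ≠ F := by
        intro h
        exact (Finset.disjoint_left.mp h4' hLFs') (h ▸ hFGs')
      have hLΔ' : L ∈ Δ.erase G := hLleaf'.1
      have hLΔ : L ∈ Δ := Finset.mem_of_mem_erase hLΔ'
      have hLnFs : L ∉ Fs := by
        intro hLFs
        have hemp := h5 L hLFs F hFFs hLF
        have : v ∈ L ∩ F := Finset.mem_inter.mpr ⟨hvL, hvF⟩
        simp [hemp] at this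
      -- find the facet D of Δ.erase G with maximal intersection with L
      classical
      set T := (Δ.erase G).filter (fun A => (A ∩ L).Nonempty ∧ A ≠ L) with hTdef
      have hFT : F ∈ T := by
        refine Finset.mem_filter.mpr ⟨hFΔ', ⟨v, Finset.mem_inter.mpr ⟨hvF, hvL⟩⟩, Ne.symm hLF⟩
      obtain ⟨D, hDT, hDmax⟩ := T.exists_max_image (fun A => (A ∩ L).card) ⟨F, hFT⟩
      obtain ⟨hDΔ', hDm, hDL⟩ : D ∈ Δ.erase G ∧ (D ∩ L).Nonempty ∧ D ≠ L := by
        have := Finset.mem_filter.mp hDT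
        exact ⟨this.1, this.2.1, this.2.2⟩
      have key : ∀ A ∈ Δ.erase G, A ≠ L → A ∩ L ⊆ D ∩ L := by
        intro A hA hAL
        rcases (A ∩ L).eq_empty_or_nonempty with he | hne
        · simp [he]
        · have hAT : A ∈ T := Finset.mem_filter.mpr ⟨hA, hne, hAL⟩
          have hcomp := ih (Δ.erase G) Fs' Gs' hcard' hg' L hLleaf'
            A D hA hDΔ' hAL hDL hne hDm
          rcases hcomp with h | h
          · exact h
          · have heq := Finset.eq_of_subset_of_card_le h (hDmax A hAT)
            rw [heq]
      have hGL : G ∩ L ⊆ D ∩ L := by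
        intro p hp
        obtain ⟨hpG, hpL⟩ := Finset.mem_inter.mp hp
        obtain ⟨Fh, hFhFs, hpFh⟩ := h2 G hGGs p hpG
        have hFhG : Fh ≠ G := by
          intro h
          exact (Finset.disjoint_left.mp h4 hFhFs) (h ▸ hGGs)
        have hFhΔ' : Fh ∈ Δ.erase G :=
          Finset.mem_erase.mpr ⟨hFhG, by rw [h1]; exact Finset.mem_union_left _ hFhFs⟩
        have hFhL : Fh ≠ L := by
          intro h
          exact hLnFs (h ▸ hFhFs)
        exact key Fh hFhΔ' hFhL (Finset.mem_inter.mpr ⟨hpFh, hpL⟩)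
      -- hence D dominates L in all of Δ, so L is a leaf of Δ: contradiction
      have hLleaf : IsLeaf Δ L := by
        refine ⟨hLΔ, Or.inr ⟨D, Finset.mem_of_mem_erase hDΔ', hDL, ?_⟩⟩
        intro A hA hAL
        intro a ha
        obtain ⟨haL, haA⟩ := Finset.mem_inter.mp ha
        by_cases hAG : A = G
        · have := hGL (Finset.mem_inter.mpr ⟨hAG ▸ haA, haL⟩)
          exact Finset.mem_inter.mpr ⟨haL, (Finset.mem_inter.mp this).1⟩
        · have := key A (Finset.mem_erase.mpr ⟨hAG, hA⟩) hAL
            (Finset.mem_inter.mpr ⟨haA, haL⟩)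
          exact Finset.mem_inter.mpr ⟨haL, (Finset.mem_inter.mp this).1⟩
      exact hLnFs ((h3 L).mpr hLleaf)
    -- conclude by the inductive hypothesis applied to Δ.erase G
    exact ih (Δ.erase G) Fs' Gs' hcard' hg' F hFleaf' H H'
      (Finset.mem_erase.mpr ⟨hHG, hH⟩) (Finset.mem_erase.mpr ⟨hH'G, hH'⟩)
      hHF hH'F hHm hH'm

/-- In a grafted simplicial complex, the facets meeting a fixed leaf `F`
have nested intersections with `F`. -/
theorem grafted_embedded_intersections (Δ Fs Gs : Finset (Finset α))
    (hgraft : IsGrafted Δ Fs Gs) (F : Finset α) (hF : IsLeaf Δ F)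
    (H H' : Finset α) (hH : H ∈ Δ) (hH' : H' ∈ Δ)
    (hHF : H ≠ F) (hH'F : H' ≠ F)
    (hHmeet : (H ∩ F).Nonempty) (hH'meet : (H' ∩ F).Nonempty) :
    H ∩ F ⊆ H' ∩ F ∨ H' ∩ F ⊆ H ∩ F :=
  grafted_embedded_intersections_aux Δ.card Δ Fs Gs le_rfl hgraft F hF
    H H' hH hH' hHF hH'F hHmeet hH'meet
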